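/- In an n-Lie Rinehart algebra (L, A, [·,…,·], ρ), the kernel K = {x ∈ L : ρ(x, y_1,…,y_{n-2}) = 0 for all y_i ∈ L} is an ideal of the n-Lie Rinehart algebra: it is an ideal of the n-Lie algebra, AK ⊆ K, and ρ(K,L,…,L)(A)·L ⊆ K. -/

import Mathlib

open Function BigOperators

/-- K-multilinearity of a map on tuples. -/
def IsMultilin (R : Type*) [CommRing R] {L N : Type*} [AddCommGroup L] [Module R L]
    [AddCommGroup N] [Module R N] {m : ℕ} (f : (Fin m → L) → N) : Prop :=
  (∀ (x : Fin m → L) (i : Fin m) (u v : L),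
    f (Function.update x i (u + v)) = f (Function.update x i u) + f (Function.update x i v)) ∧
  (∀ (x : Fin m → L) (i : Fin m) (c : R) (u : L),
    f (Function.update x i (c • u)) = c • f (Function.update x i u))

/-- Alternating: vanishes on tuples with a repeated entry. -/
def IsAlt {L N : Type*} [AddCommGroup N] {m : ℕ} (f : (Fin m → L) → N) : Prop :=
  ∀ (x : Fin m → L) (i j : Fin m), i ≠ j → x i = x j → f x = 0

/-- Filippov (fundamental) identity for an (n+2)-ary bracket. -/
def Filippov {L : Type*} [AddCommGroup L] {n : ℕ} (b : (Fin (n+2) → L) → L) : Prop :=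
  ∀ (x : Fin (n+1) → L) (y : Fin (n+2) → L),
    b (Fin.snoc x (b y)) = ∑ i : Fin (n+2), b (Function.update y i (b (Fin.snoc x (y i))))

/-- Kasymov representation of an (n+2)-Lie algebra on `M`. -/
def IsRep (R : Type*) [CommRing R] {L M : Type*} [AddCommGroup L] [Module R L]
    [AddCommGroup M] [Module R M] {n : ℕ}
    (b : (Fin (n+2) → L) → L) (ρ : (Fin (n+1) → L) → M → M) : Prop :=
  (∀ (x : Fin (n+1) → L) (m m' : M), ρ x (m + m') = ρ x m + ρ x m') ∧
  (∀ (x : Fin (n+1) → L) (c : R) (m : M), ρ x (c • m) = c • ρ x m) ∧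
  IsMultilin R ρ ∧ IsAlt ρ ∧
  (∀ (x y : Fin (n+1) → L) (m : M),
    ρ x (ρ y m) - ρ y (ρ x m) = ∑ i : Fin (n+1), ρ (Function.update y i (b (Fin.snoc x (y i)))) m) ∧
  (∀ (x : Fin n → L) (y : Fin (n+2) → L) (m : M),
    ρ (Fin.snoc x (b y)) m
      = ∑ i : Fin (n+2), ((-1 : R) ^ (n + 1 + (i : ℕ))) •
          ρ (i.removeNth y) (ρ (Fin.snoc x (y i)) m))

/-- (n+2)-Lie Rinehart algebra structure. -/
def IsNLieRinehart (R A : Type*) [CommRing R] [CommRing A] [Algebra R A]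
    {L : Type*} [AddCommGroup L] [Module R L] [Module A L] [IsScalarTower R A L] {n : ℕ}
    (b : (Fin (n+2) → L) → L) (ρ : (Fin (n+1) → L) → A → A) : Prop :=
  IsMultilin R b ∧ IsAlt b ∧ Filippov b ∧
  (∀ (x : Fin (n+1) → L) (a a' : A), ρ x (a * a') = a * ρ x a' + a' * ρ x a) ∧
  IsRep R b ρ ∧
  (∀ (x : Fin (n+1) → L) (i : Fin (n+1)) (a : A),
    ρ (Function.update x i (a • x i)) = a • ρ x) ∧
  (∀ (x : Fin (n+2) → L) (a : A),
    b (Function.update x (Fin.last (n+1)) (a • x (Fin.last (n+1))))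
      = a • b x + ρ (Fin.init x) a • x (Fin.last (n+1)))

/-- Representation of an (n+2)-Lie Rinehart algebra on an `A`-module `M`. -/
def IsRinehartRep (R A : Type*) [CommRing R] [CommRing A] [Algebra R A]
    {L M : Type*} [AddCommGroup L] [Module R L] [Module A L] [IsScalarTower R A L]
    [AddCommGroup M] [Module R M] [Module A M] [IsScalarTower R A M] {n : ℕ}
    (b : (Fin (n+2) → L) → L) (ρ : (Fin (n+1) → L) → A → A)
    (ψ : (Fin (n+1) → L) → M → M) : Prop :=
  IsRep R b ψ ∧
  (∀ (x : Fin (n+1) → L) (i : Fin (n+1)) (a : A),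
    ψ (Function.update x i (a • x i)) = a • ψ x) ∧
  (∀ (x : Fin (n+1) → L) (a : A) (m : M), ψ x (a • m) = a • ψ x m + ρ x a • m)

lemma multilin_alt_swap {R : Type*} [CommRing R] {L N : Type*} [AddCommGroup L] [Module R L]
    [AddCommGroup N] [Module R N] {m : ℕ} {f : (Fin m → L) → N}
    (hml : IsMultilin R f) (halt : IsAlt f) (x : Fin m → L) {i j : Fin m} (hij : i ≠ j) :
    f (x ∘ Equiv.swap i j) = - f x := by
  have hswap : x ∘ Equiv.swap i j
      = Function.update (Function.update x j (x i)) i (x j) := by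
    funext k
    rcases eq_or_ne k i with rfl | hki
    · simp [Equiv.swap_apply_left, Function.update_self]
    · rcases eq_or_ne k j with rfl | hkj
      · simp [Equiv.swap_apply_right, Function.update_of_ne hij, Function.update_of_ne hij.symm]
      · simp [Equiv.swap_apply_of_ne_of_ne hki hkj, Function.update_of_ne hki,
          Function.update_of_ne hkj]
  have h0 : f (Function.update (Function.update x i (x i + x j)) j (x i + x j)) = 0 := by
    apply halt _ i j hij
    simp [Function.update_of_ne hij, Function.update_of_ne hij.symm]
  have e1 : f (Function.update (Function.update x i (x i + x j)) j (x i + x j))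
      = f (Function.update (Function.update x i (x i + x j)) j (x i))
        + f (Function.update (Function.update x i (x i + x j)) j (x j)) :=
    hml.1 _ j (x i) (x j)
  have cu : Function.update (Function.update x i (x i + x j)) j (x i)
      = Function.update (Function.update x j (x i)) i (x i + x j) :=
    Function.update_comm hij _ _ _
  have cv : Function.update (Function.update x i (x i + x j)) j (x j)
      = Function.update (Function.update x j (x j)) i (x i + x j) :=
    Function.update_comm hij _ _ _
  have e2 : f (Function.update (Function.update x j (x i)) i (x i + x j))
      = f (Function.update (Function.update x j (x i)) i (x i))
        + f (Function.update (Function.update x j (x i)) i (x j)) := hml.1 _ i (x i) (x j)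
  have e3 : f (Function.update (Function.update x j (x j)) i (x i + x j))
      = f (Function.update (Function.update x j (x j)) i (x i))
        + f (Function.update (Function.update x j (x j)) i (x j)) := hml.1 _ i (x i) (x j)
  have z1 : f (Function.update (Function.update x j (x i)) i (x i)) = 0 := by
    apply halt _ i j hij
    simp [Function.update_of_ne hij, Function.update_of_ne hij.symm]
  have z2 : f (Function.update (Function.update x j (x j)) i (x j)) = 0 := by
    apply halt _ i j hij
    simp [Function.update_of_ne hij, Function.update_of_ne hij.symm]
  have ex : Function.update (Function.update x j (x j)) i (x i) = x := by
    rw [Function.update_eq_self, Function.update_eq_self]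
  rw [h0, cu, cv, e2, e3, z1, z2, ex, zero_add, add_zero] at e1
  rw [hswap]
  exact eq_neg_of_add_eq_zero_left e1.symm

/-- the kernel `K = {x | ρ(x,y₁,…) = 0 ∀ yᵢ}` of the anchor of an
(n+2)-Lie Rinehart algebra is an ideal: it is an `n`-Lie algebra ideal, `AK ⊆ K`,
and `ρ(K,L,…,L)(A)·L ⊆ K`. -/
theorem kernel_is_ideal (R A : Type*) [Field R] [CharZero R]
    [CommRing A] [Algebra R A]
    {L : Type*} [AddCommGroup L] [Module R L] [Module A L] [IsScalarTower R A L] {n : ℕ}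
    (b : (Fin (n+2) → L) → L) (ρ : (Fin (n+1) → L) → A → A)
    (h : IsNLieRinehart R A b ρ)
    (Ker : Set L) (hKer : Ker = {x : L | ∀ (y : Fin n → L) (a : A), ρ (Fin.cons x y) a = 0}) :
    -- n-Lie algebra ideal: [K, L, …, L] ⊆ K
    (∀ x ∈ Ker, ∀ (z : Fin (n+1) → L), b (Fin.cons x z) ∈ Ker) ∧
    -- A·K ⊆ K
    (∀ x ∈ Ker, ∀ (a : A), a • x ∈ Ker) ∧
    -- ρ(K, L, …, L)(A)·L ⊆ K
    (∀ x ∈ Ker, ∀ (y : Fin n → L) (a : A) (u : L), (ρ (Fin.cons x y) a) • u ∈ Ker) := by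
  subst hKer
  obtain ⟨hbml, hbalt, hfil, hleib, hrep, hρa, hbrack⟩ := h
  obtain ⟨hadd, hsmulA, hml, halt, hcomp, hbr⟩ := hrep
  -- ρ sends 0 ∈ A to 0
  have hρ0 : ∀ (w : Fin (n+1) → L), ρ w (0 : A) = 0 := by
    intro w
    have h1 := hadd w 0 0
    rw [add_zero] at h1
    exact left_eq_add.mp h1
  -- if an element of the kernel appears anywhere in a tuple, ρ vanishes
  have hany : ∀ x : L, (∀ (y : Fin n → L) (a : A), ρ (Fin.cons x y) a = 0) →
      ∀ (w : Fin (n+1) → L) (i : Fin (n+1)), w i = x → ∀ a, ρ w a = 0 := by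
    intro x hx w i hwi a
    have hcons : ∀ (w' : Fin (n+1) → L), w' 0 = x → ∀ a', ρ w' a' = 0 := by
      intro w' hw0 a'
      have : w' = Fin.cons x (Fin.tail w') := by
        rw [← hw0, Fin.cons_self_tail]
      rw [this]
      exact hx _ a'
    rcases eq_or_ne i 0 with rfl | hi0
    · exact hcons w hwi a
    · have hs := multilin_alt_swap hml halt w hi0
      have hz : ρ (w ∘ Equiv.swap i 0) a = 0 := by
        apply hcons
        simp [Equiv.swap_apply_right, hwi]
      rw [hs] at hz
      simpa using hz
  refine ⟨?_, ?_, ?_⟩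
  · -- bracket part
    intro x hx z
    intro y a
    set B := b (Fin.cons x z) with hB
    -- first: ρ (snoc v B) a = 0 for all v
    have hsnoc : ∀ (v : Fin n → L) (a' : A), ρ (Fin.snoc v B) a' = 0 := by
      intro v a'
      rw [hB, hbr v (Fin.cons x z) a']
      apply Finset.sum_eq_zero
      intro i _
      rcases eq_or_ne i 0 with rfl | hi0
      · have : ρ (Fin.snoc v ((Fin.cons x z : Fin (n+2) → L) 0)) a' = 0 := by
          apply hany x hx _ (Fin.last n)
          simp
        rw [this, hρ0, smul_zero]
      · have : (i.removeNth (Fin.cons x z : Fin (n+2) → L)) 0 = x := by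
          show (Fin.cons x z : Fin (n+2) → L) (i.succAbove 0) = x
          have : i.succAbove 0 = 0 := by
            rw [Fin.succAbove_of_castSucc_lt]
            · rfl
            · simpa using (Fin.pos_iff_ne_zero.mpr hi0)
          rw [this, Fin.cons_zero]
        rw [hany x hx _ 0 this _, smul_zero]
    -- any tuple with B in the last slot vanishes
    have hlast : ∀ (q : Fin (n+1) → L), q (Fin.last n) = B → ∀ a', ρ q a' = 0 := by
      intro q hq a'
      have : q = Fin.snoc (Fin.init q) B := by
        rw [← hq, Fin.snoc_init_self]
      rw [this]
      exact hsnoc _ a'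
    rcases eq_or_ne (0 : Fin (n+1)) (Fin.last n) with h0l | h0l
    · apply hlast
      rw [← h0l, Fin.cons_zero]
    · have hs := multilin_alt_swap hml halt (Fin.cons B y) h0l
      have hz : ρ ((Fin.cons B y) ∘ Equiv.swap 0 (Fin.last n)) a = 0 := by
        apply hlast
        simp [Equiv.swap_apply_right]
      rw [hs] at hz
      simpa using hz
  · -- A-module part
    intro x hx a y a'
    have key := hρa (Fin.cons x y) 0 a
    rw [Fin.cons_zero, Fin.update_cons_zero] at key
    rw [key]
    simp only [Pi.smul_apply, smul_eq_mul]
    rw [hx y a', mul_zero]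
  · -- anchor image part
    intro x hx y a u y' a'
    rw [hx y a, zero_smul]
    have key := hml.2 (Fin.cons (0 : L) y') 0 (0 : R) 0
    rw [zero_smul, Fin.update_cons_zero, zero_smul] at key
    rw [key]
    rfl
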